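/- Let k < n be positive integers. The polytope P in R^n defined by the conditions 0 ≤ x_i ≤ 1 for all i, x_1 + ... + x_n = k, and x_{k+1} + ... + x_n ≤ 1, has exactly k*(n-k) + 1 vertices, namely the indicator vectors of the following subsets of {1,...,n}: the set {1,...,k}, and the sets ({1,...,k} \ {i}) ∪ {j} for 1 ≤ i ≤ k and k+1 ≤ j ≤ n. -/

import Mathlib

open Finset

lemma card_head (n k : ℕ) (hkn : k ≤ n) :
    (Finset.univ.filter (fun i : Fin n => (i : ℕ) < k)).card = k := by
  have : (Finset.univ.filter (fun i : Fin n => (i : ℕ) < k)).image Fin.val = Finset.range k := by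
    ext m
    simp only [mem_image, mem_filter, mem_univ, true_and, mem_range]
    constructor
    · rintro ⟨i, hi, rfl⟩; exact hi
    · intro hm; exact ⟨⟨m, lt_of_lt_of_le hm hkn⟩, hm, rfl⟩
  have h2 := Finset.card_image_of_injective
    (Finset.univ.filter (fun i : Fin n => (i : ℕ) < k)) Fin.val_injective
  rw [this, Finset.card_range] at h2
  omega

lemma card_tail (n k : ℕ) (hkn : k ≤ n) :
    (Finset.univ.filter (fun i : Fin n => k ≤ (i : ℕ))).card = n - k := by
  have := Finset.card_filter_add_card_filter_not (s := (Finset.univ : Finset (Fin n)))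
    (p := fun i : Fin n => (i : ℕ) < k)
  simp only [not_lt] at this
  have hh := card_head n k hkn
  simp only [Finset.card_univ, Fintype.card_fin] at this
  omega

lemma sum_update2 {n : ℕ} (S : Finset (Fin n)) (x : Fin n → ℝ) (i j : Fin n) (hij : i ≠ j)
    (a b : ℝ) :
    ∑ t ∈ S, Function.update (Function.update x i a) j b t =
      ∑ t ∈ S, x t + (if i ∈ S then a - x i else 0) + (if j ∈ S then b - x j else 0) := by
  by_cases hjS : j ∈ S
  · rw [Finset.sum_update_of_mem hjS]
    have hSx : ∑ t ∈ S, x t = ∑ t ∈ S \ {j}, x t + x j := by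
      rw [Finset.sdiff_singleton_eq_erase, Finset.sum_erase_add]
      exact hjS
    by_cases hiS : i ∈ S
    · have hiS' : i ∈ S \ {j} := by
        simp [Finset.mem_sdiff, hiS, hij]
      rw [Finset.sum_update_of_mem hiS']
      have hSx' : ∑ t ∈ S \ {j}, x t = ∑ t ∈ (S \ {j}) \ {i}, x t + x i := by
        rw [Finset.sdiff_singleton_eq_erase (s := S \ {j}), Finset.sum_erase_add]
        exact hiS'
      simp only [hiS, hjS, if_pos]
      linarith
    · have hiS' : i ∉ S \ {j} := by simp [Finset.mem_sdiff, hiS]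
      rw [Finset.sum_update_of_notMem hiS']
      simp only [hiS, hjS, if_pos, if_neg, not_false_iff]
      linarith
  · rw [Finset.sum_update_of_notMem hjS]
    by_cases hiS : i ∈ S
    · rw [Finset.sum_update_of_mem hiS]
      have hSx : ∑ t ∈ S, x t = ∑ t ∈ S \ {i}, x t + x i := by
        rw [Finset.sdiff_singleton_eq_erase, Finset.sum_erase_add]
        exact hiS
      simp only [hiS, hjS, if_pos, if_neg, not_false_iff]
      linarith
    · rw [Finset.sum_update_of_notMem hiS]
      simp [hiS, hjS]

lemma not_extreme_of_pair {n k : ℕ} {x : Fin n → ℝ}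
    (hb : ∀ i, 0 ≤ x i ∧ x i ≤ 1) (hs : ∑ i, x i = (k:ℝ))
    (ht : ∑ t ∈ Finset.univ.filter (fun t : Fin n => k ≤ (t:ℕ)), x t ≤ 1)
    {i j : Fin n} (hij : i ≠ j)
    (hi0 : 0 < x i) (hi1 : x i < 1) (hj0 : 0 < x j) (hj1 : x j < 1)
    (hcase : ((k ≤ (i:ℕ)) ↔ (k ≤ (j:ℕ))) ∨
      ∑ t ∈ Finset.univ.filter (fun t : Fin n => k ≤ (t:ℕ)), x t < 1) :
    x ∉ Set.extremePoints ℝ {y : Fin n → ℝ | (∀ t, 0 ≤ y t ∧ y t ≤ 1) ∧ (∑ t, y t = (k:ℝ)) ∧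
      ∑ t ∈ Finset.univ.filter (fun t : Fin n => k ≤ (t:ℕ)), y t ≤ 1} := by
  intro hext
  rw [mem_extremePoints] at hext
  set T := Finset.univ.filter (fun t : Fin n => k ≤ (t:ℕ)) with hT
  set s := ∑ t ∈ T, x t with hsdef
  set δ : ℝ := if ((k ≤ (i:ℕ)) ↔ (k ≤ (j:ℕ))) then 1 else 1 - s with hδ
  have hδpos : 0 < δ := by
    rw [hδ]; split_ifs with h
    · norm_num
    · rcases hcase with h' | h'
      · exact absurd h' h
      · linarith
  set ε : ℝ := min (min (x i) (1 - x i)) (min (min (x j) (1 - x j)) δ) with hε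
  have hεpos : 0 < ε := by
    apply lt_min (lt_min hi0 (by linarith)) (lt_min (lt_min hj0 (by linarith)) hδpos)
  have hε1 : ε ≤ x i := le_trans (min_le_left _ _) (min_le_left _ _)
  have hε2 : ε ≤ 1 - x i := le_trans (min_le_left _ _) (min_le_right _ _)
  have hε3 : ε ≤ x j := le_trans (min_le_right _ _) (le_trans (min_le_left _ _) (min_le_left _ _))
  have hε4 : ε ≤ 1 - x j := le_trans (min_le_right _ _) (le_trans (min_le_left _ _) (min_le_right _ _))
  have hε5 : ε ≤ δ := le_trans (min_le_right _ _) (min_le_right _ _)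
  have hji : j ≠ i := hij.symm
  set y : Fin n → ℝ := Function.update (Function.update x i (x i + ε)) j (x j - ε) with hy
  set z : Fin n → ℝ := Function.update (Function.update x i (x i - ε)) j (x j + ε) with hz
  have hyi : y i = x i + ε := by rw [hy, Function.update_of_ne hij, Function.update_self]
  have hyj : y j = x j - ε := by rw [hy, Function.update_self]
  have hyt : ∀ t, t ≠ i → t ≠ j → y t = x t := by
    intro t h1 h2; rw [hy, Function.update_of_ne h2, Function.update_of_ne h1]
  have hzi : z i = x i - ε := by rw [hz, Function.update_of_ne hij, Function.update_self]
  have hzj : z j = x j + ε := by rw [hz, Function.update_self]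
  have hzt : ∀ t, t ≠ i → t ≠ j → z t = x t := by
    intro t h1 h2; rw [hz, Function.update_of_ne h2, Function.update_of_ne h1]
  have hiu : i ∈ (Finset.univ : Finset (Fin n)) := Finset.mem_univ i
  have hju : j ∈ (Finset.univ : Finset (Fin n)) := Finset.mem_univ j
  -- tail sum case analysis helper
  have htail : ∀ σ : ℝ, σ = ε ∨ σ = -ε →
      s + (if i ∈ T then (x i + σ) - x i else 0) + (if j ∈ T then (x j - σ) - x j else 0) ≤ 1 := by
    intro σ hσ
    have hσε : σ ≤ ε ∧ -ε ≤ σ := by rcases hσ with rfl | rfl <;> constructor <;> linarith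
    by_cases hiT : i ∈ T <;> by_cases hjT : j ∈ T <;>
      simp only [hiT, hjT, if_pos, if_neg, not_false_iff] <;> try linarith
    · -- i ∈ T, j ∉ T : cross case
      have hiff : ¬ ((k ≤ (i:ℕ)) ↔ (k ≤ (j:ℕ))) := by
        rw [hT] at hiT hjT
        simp only [Finset.mem_filter, Finset.mem_univ, true_and] at hiT hjT
        tauto
      have : δ = 1 - s := by rw [hδ, if_neg hiff]
      have : σ ≤ 1 - s := by linarith [hσε.1, hε5]
      linarith
    · -- i ∉ T, j ∈ T
      have hiff : ¬ ((k ≤ (i:ℕ)) ↔ (k ≤ (j:ℕ))) := by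
        rw [hT] at hiT hjT
        simp only [Finset.mem_filter, Finset.mem_univ, true_and] at hiT hjT
        tauto
      have : δ = 1 - s := by rw [hδ, if_neg hiff]
      have : -σ ≤ 1 - s := by linarith [hσε.2, hε5]
      linarith
  have hymem : y ∈ {y : Fin n → ℝ | (∀ t, 0 ≤ y t ∧ y t ≤ 1) ∧ (∑ t, y t = (k:ℝ)) ∧
      ∑ t ∈ T, y t ≤ 1} := by
    refine ⟨fun t => ?_, ?_, ?_⟩
    · by_cases h2 : t = j
      · subst h2; rw [hyj]; constructor <;> linarith
      · by_cases h1 : t = i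
        · subst h1; rw [hyi]; constructor <;> linarith [(hb t).1, (hb t).2]
        · rw [hyt t h1 h2]; exact hb t
    · rw [hy, sum_update2 _ x i j hij]
      simp only [hiu, hju, if_pos]
      linarith [hs]
    · rw [hy, sum_update2 _ x i j hij]
      exact htail ε (Or.inl rfl)
  have hzmem : z ∈ {y : Fin n → ℝ | (∀ t, 0 ≤ y t ∧ y t ≤ 1) ∧ (∑ t, y t = (k:ℝ)) ∧
      ∑ t ∈ T, y t ≤ 1} := by
    refine ⟨fun t => ?_, ?_, ?_⟩
    · by_cases h2 : t = j
      · subst h2; rw [hzj]; constructor <;> linarith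
      · by_cases h1 : t = i
        · subst h1; rw [hzi]; constructor <;> linarith [(hb t).1, (hb t).2]
        · rw [hzt t h1 h2]; exact hb t
    · rw [hz, sum_update2 _ x i j hij]
      simp only [hiu, hju, if_pos]
      linarith [hs]
    · rw [hz, sum_update2 _ x i j hij]
      have := htail (-ε) (Or.inr rfl)
      convert this using 3 <;> ring_nf
  have hseg : x ∈ openSegment ℝ y z := by
    refine ⟨1/2, 1/2, by norm_num, by norm_num, by norm_num, ?_⟩
    funext t
    simp only [Pi.add_apply, Pi.smul_apply, smul_eq_mul]
    by_cases h2 : t = j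
    · subst h2; rw [hyj, hzj]; ring
    · by_cases h1 : t = i
      · subst h1; rw [hyi, hzi]; ring
      · rw [hyt t h1 h2, hzt t h1 h2]; ring
  have := (hext.2 y hymem z hzmem hseg).1
  have := congrFun this i
  rw [hyi] at this
  linarith

lemma sum_zero_one {n : ℕ} (S : Finset (Fin n)) (x : Fin n → ℝ)
    (h : ∀ t ∈ S, x t = 0 ∨ x t = 1) :
    ∑ t ∈ S, x t = ((S.filter (fun t => x t = 1)).card : ℝ) := by
  rw [← Finset.sum_boole]
  apply Finset.sum_congr rfl
  intro t ht
  rcases h t ht with h0 | h1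
  · simp [h0]
  · simp [h1]

lemma extreme_zero_one {n k : ℕ} {x : Fin n → ℝ}
    (hext : x ∈ Set.extremePoints ℝ {y : Fin n → ℝ | (∀ t, 0 ≤ y t ∧ y t ≤ 1) ∧
      (∑ t, y t = (k:ℝ)) ∧
      ∑ t ∈ Finset.univ.filter (fun t : Fin n => k ≤ (t:ℕ)), y t ≤ 1}) :
    ∀ t, x t = 0 ∨ x t = 1 := by
  obtain ⟨hb, hs, ht⟩ := hext.1
  by_contra hfr
  push_neg at hfr
  obtain ⟨i₀, hi₀0, hi₀1⟩ := hfr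
  have hi₀frac : 0 < x i₀ ∧ x i₀ < 1 :=
    ⟨lt_of_le_of_ne (hb i₀).1 (Ne.symm hi₀0), lt_of_le_of_ne (hb i₀).2 hi₀1⟩
  set T := Finset.univ.filter (fun t : Fin n => k ≤ (t:ℕ)) with hT
  set H := Finset.univ.filter (fun t : Fin n => ¬ k ≤ (t:ℕ)) with hH
  have hsplit : ∑ t ∈ T, x t + ∑ t ∈ H, x t = (k:ℝ) := by
    rw [hT, hH, Finset.sum_filter_add_sum_filter_not, hs]
  -- no two fractional on the same side
  have hsame : ∀ i j : Fin n, i ≠ j → (0 < x i ∧ x i < 1) → (0 < x j ∧ x j < 1) →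
      ¬ ((k ≤ (i:ℕ)) ↔ (k ≤ (j:ℕ))) := by
    intro i j hij hi hj hiff
    exact not_extreme_of_pair hb hs ht hij hi.1 hi.2 hj.1 hj.2 (Or.inl hiff) hext
  -- if there is a fractional tail coordinate, the tail sum is < 1
  have htailfrac : ∀ j : Fin n, k ≤ (j:ℕ) → (0 < x j ∧ x j < 1) → ∑ t ∈ T, x t < 1 := by
    intro j hjk hjf
    have hjT : j ∈ T := by simp [hT, hjk]
    have hrest : ∀ t ∈ T.erase j, x t = 0 ∨ x t = 1 := by
      intro t htm
      rw [Finset.mem_erase] at htm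
      by_contra hc
      push_neg at hc
      have htf : 0 < x t ∧ x t < 1 :=
        ⟨lt_of_le_of_ne (hb t).1 (Ne.symm hc.1), lt_of_le_of_ne (hb t).2 hc.2⟩
      have htk : k ≤ (t:ℕ) := by
        have := htm.2; rw [hT, Finset.mem_filter] at this; exact this.2
      exact hsame t j htm.1 htf hjf (iff_of_true htk hjk)
    have hsum : ∑ t ∈ T, x t = x j + ∑ t ∈ T.erase j, x t := by
      rw [Finset.add_sum_erase _ _ hjT]
    rw [hsum, sum_zero_one _ _ hrest]
    set m := ((T.erase j).filter (fun t => x t = 1)).card with hm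
    have hm1 : (m:ℝ) < 1 := by
      have : x j + (m:ℝ) ≤ 1 := by rw [hsum, sum_zero_one _ _ hrest] at ht; exact ht
      linarith [hjf.1]
    have : m = 0 := by exact_mod_cast Nat.lt_one_iff.mp (by exact_mod_cast hm1)
    rw [this]
    push_cast
    linarith [hjf.2]
  -- case analysis
  by_cases hHf : ∃ i : Fin n, ¬ k ≤ (i:ℕ) ∧ 0 < x i ∧ x i < 1
  · obtain ⟨i, hik, hif⟩ := hHf
    by_cases hTf : ∃ j : Fin n, k ≤ (j:ℕ) ∧ 0 < x j ∧ x j < 1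
    · obtain ⟨j, hjk, hjf⟩ := hTf
      have hij : i ≠ j := by rintro rfl; exact hik hjk
      exact not_extreme_of_pair hb hs ht hij hif.1 hif.2 hjf.1 hjf.2
        (Or.inr (htailfrac j hjk hjf)) hext
    · -- no tail fractional: all tail 0/1, head has only i fractional
      push_neg at hTf
      have htail01 : ∀ t ∈ T, x t = 0 ∨ x t = 1 := by
        intro t htm
        rw [hT, Finset.mem_filter] at htm
        rcases eq_or_lt_of_le (hb t).1 with h0 | h0
        · exact Or.inl h0.symm
        · exact Or.inr (le_antisymm (hb t).2 (hTf t htm.2 h0))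
      have hiH : i ∈ H := by simp only [hH, Finset.mem_filter, Finset.mem_univ, true_and]; exact hik
      have hheadrest : ∀ t ∈ H.erase i, x t = 0 ∨ x t = 1 := by
        intro t htm
        rw [Finset.mem_erase] at htm
        by_contra hc
        push_neg at hc
        have htf : 0 < x t ∧ x t < 1 :=
          ⟨lt_of_le_of_ne (hb t).1 (Ne.symm hc.1), lt_of_le_of_ne (hb t).2 hc.2⟩
        have htk : ¬ k ≤ (t:ℕ) := by
          have := htm.2; rw [hH, Finset.mem_filter] at this; exact this.2
        exact hsame t i htm.1 htf hif (iff_of_false htk hik)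
      have hsumH : ∑ t ∈ H, x t = x i + ∑ t ∈ H.erase i, x t := by
        rw [Finset.add_sum_erase _ _ hiH]
      rw [sum_zero_one _ _ htail01, hsumH, sum_zero_one _ _ hheadrest] at hsplit
      set m := (T.filter (fun t => x t = 1)).card
      set m' := ((H.erase i).filter (fun t => x t = 1)).card
      have h1 : (m:ℝ) + (m':ℝ) < k := by linarith [hif.1]
      have h2 : (k:ℝ) < (m:ℝ) + (m':ℝ) + 1 := by linarith [hif.2]
      have h1' : m + m' < k := by exact_mod_cast h1
      have h2' : k < m + m' + 1 := by exact_mod_cast h2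
      omega
  · -- no head fractional: i₀ is tail fractional
    push_neg at hHf
    have hi₀k : k ≤ (i₀:ℕ) := by
      by_contra hc
      push_neg at hc
      have := hHf i₀ hc hi₀frac.1
      linarith [hi₀frac.2]
    have hslt := htailfrac i₀ hi₀k hi₀frac
    -- tail sum = x i₀ < 1, head all 0/1, derive contradiction
    have hhead01 : ∀ t ∈ H, x t = 0 ∨ x t = 1 := by
      intro t htm
      rw [hH, Finset.mem_filter] at htm
      rcases eq_or_lt_of_le (hb t).1 with h0 | h0
      · exact Or.inl h0.symm
      · refine Or.inr (le_antisymm (hb t).2 (hHf t ?_ h0))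
        omega
    have hi₀T : i₀ ∈ T := by simp [hT, hi₀k]
    have hrest : ∀ t ∈ T.erase i₀, x t = 0 ∨ x t = 1 := by
      intro t htm
      rw [Finset.mem_erase] at htm
      by_contra hc
      push_neg at hc
      have htf : 0 < x t ∧ x t < 1 :=
        ⟨lt_of_le_of_ne (hb t).1 (Ne.symm hc.1), lt_of_le_of_ne (hb t).2 hc.2⟩
      have htk : k ≤ (t:ℕ) := by
        have := htm.2; rw [hT, Finset.mem_filter] at this; exact this.2
      exact hsame t i₀ htm.1 htf hi₀frac (iff_of_true htk hi₀k)
    have hsumT : ∑ t ∈ T, x t = x i₀ + ∑ t ∈ T.erase i₀, x t := by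
      rw [Finset.add_sum_erase _ _ hi₀T]
    rw [hsumT, sum_zero_one _ _ hrest, sum_zero_one _ _ hhead01] at hsplit
    set m := ((T.erase i₀).filter (fun t => x t = 1)).card
    set m' := (H.filter (fun t => x t = 1)).card
    have h1 : (m:ℝ) + (m':ℝ) < k := by linarith [hi₀frac.1]
    have h2 : (k:ℝ) < (m:ℝ) + (m':ℝ) + 1 := by linarith [hi₀frac.2]
    have h1' : m + m' < k := by exact_mod_cast h1
    have h2' : k < m + m' + 1 := by exact_mod_cast h2
    omega

lemma classify {n k : ℕ} (hk : 0 < k) (hkn : k < n) {x : Fin n → ℝ}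
    (hs : ∑ t, x t = (k:ℝ))
    (ht : ∑ t ∈ Finset.univ.filter (fun t : Fin n => k ≤ (t:ℕ)), x t ≤ 1)
    (h01 : ∀ t, x t = 0 ∨ x t = 1) :
    ∃ B : Finset (Fin n),
      (B = Finset.univ.filter (fun i : Fin n => (i : ℕ) < k) ∨
        ∃ i j : Fin n, (i : ℕ) < k ∧ k ≤ (j : ℕ) ∧
          B = insert j ((Finset.univ.filter (fun i' : Fin n => (i' : ℕ) < k)).erase i)) ∧
      x = fun i => if i ∈ B then (1 : ℝ) else 0 := by
  set Hd := Finset.univ.filter (fun i : Fin n => (i : ℕ) < k) with hHd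
  have hHdcard : Hd.card = k := card_head n k hkn.le
  set B := Finset.univ.filter (fun t => x t = 1) with hB
  have hind : x = fun i => if i ∈ B then (1 : ℝ) else 0 := by
    funext t
    rcases h01 t with h0 | h1
    · rw [h0, if_neg]
      simp only [hB, Finset.mem_filter, Finset.mem_univ, true_and, h0]
      norm_num
    · rw [h1, if_pos]
      simp only [hB, Finset.mem_filter, Finset.mem_univ, true_and, h1]
  have hBcard : B.card = k := by
    have := sum_zero_one Finset.univ x (fun t _ => h01 t)
    rw [hs] at this
    exact_mod_cast this.symm
  set Bt := B.filter (fun t : Fin n => k ≤ (t:ℕ)) with hBt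
  set Bh := B.filter (fun t : Fin n => ¬ k ≤ (t:ℕ)) with hBh
  have hBtT : Bt = (Finset.univ.filter (fun t : Fin n => k ≤ (t:ℕ))).filter (fun t => x t = 1) := by
    ext t
    simp only [hBt, hB, Finset.mem_filter, Finset.mem_univ, true_and]
    tauto
  have hBtcard : Bt.card ≤ 1 := by
    have h1 := sum_zero_one (Finset.univ.filter (fun t : Fin n => k ≤ (t:ℕ))) x
      (fun t _ => h01 t)
    rw [h1] at ht
    rw [hBtT]
    exact_mod_cast ht
  have hBunion : Bt ∪ Bh = B := Finset.filter_union_filter_not_eq _ B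
  have hBcards : Bt.card + Bh.card = B.card := Finset.card_filter_add_card_filter_not _
  refine ⟨B, ?_, hind⟩
  interval_cases h : Bt.card
  · -- Bt empty : B = Hd
    left
    have hBtempty : Bt = ∅ := Finset.card_eq_zero.mp h
    have hsub : B ⊆ Hd := by
      intro t htB
      simp only [hHd, Finset.mem_filter, Finset.mem_univ, true_and]
      by_contra hc
      have : t ∈ Bt := by
        simp only [hBt, Finset.mem_filter]
        exact ⟨htB, by omega⟩
      rw [hBtempty] at this
      exact absurd this (Finset.notMem_empty t)
    exact Finset.eq_of_subset_of_card_le hsub (by omega)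
  · -- Bt = {j}
    right
    obtain ⟨j, hj⟩ := Finset.card_eq_one.mp h
    have hjB : j ∈ B ∧ k ≤ (j:ℕ) := by
      have : j ∈ Bt := by rw [hj]; exact Finset.mem_singleton_self j
      simpa [hBt, Finset.mem_filter] using this
    have hBhsub : ∀ t ∈ Bh, t ∈ Hd := by
      intro t htm
      simp only [hBh, Finset.mem_filter] at htm
      simp only [hHd, Finset.mem_filter, Finset.mem_univ, true_and]
      omega
    have hBhcard : Bh.card = k - 1 := by omega
    have hex : ∃ i ∈ Hd, i ∉ Bh := by
      by_contra hc
      push_neg at hc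
      have := Finset.card_le_card hc
      omega
    obtain ⟨i, hiHd, hiBh⟩ := hex
    have hik : (i:ℕ) < k := by
      simpa [hHd, Finset.mem_filter] using hiHd
    refine ⟨i, j, hik, hjB.2, ?_⟩
    have hBhsub' : Bh ⊆ Hd.erase i := by
      intro t htm
      rw [Finset.mem_erase]
      exact ⟨fun he => hiBh (he ▸ htm), hBhsub t htm⟩
    have hBheq : Bh = Hd.erase i := by
      apply Finset.eq_of_subset_of_card_le hBhsub'
      rw [Finset.card_erase_of_mem hiHd]
      omega
    rw [← hBunion, hj, hBheq, ← Finset.insert_eq]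

lemma zero_one_extreme {n k : ℕ} {x : Fin n → ℝ}
    (hx : x ∈ {y : Fin n → ℝ | (∀ t, 0 ≤ y t ∧ y t ≤ 1) ∧ (∑ t, y t = (k:ℝ)) ∧
      ∑ t ∈ Finset.univ.filter (fun t : Fin n => k ≤ (t:ℕ)), y t ≤ 1})
    (h01 : ∀ t, x t = 0 ∨ x t = 1) :
    x ∈ Set.extremePoints ℝ {y : Fin n → ℝ | (∀ t, 0 ≤ y t ∧ y t ≤ 1) ∧ (∑ t, y t = (k:ℝ)) ∧
      ∑ t ∈ Finset.univ.filter (fun t : Fin n => k ≤ (t:ℕ)), y t ≤ 1} := by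
  rw [mem_extremePoints]
  refine ⟨hx, fun x₁ h1 x₂ h2 hseg => ?_⟩
  obtain ⟨a, b, ha, hb, hab, hsum⟩ := hseg
  have key : ∀ t, x₁ t = x t ∧ x₂ t = x t := by
    intro t
    have heq : a * x₁ t + b * x₂ t = x t := by
      have := congrFun hsum t
      simpa [Pi.add_apply, Pi.smul_apply, smul_eq_mul] using this
    have hb1 := (h1.1 t); have hb2 := (h2.1 t)
    rcases h01 t with h0 | h1'
    · rw [h0] at heq ⊢
      constructor
      · nlinarith [hb1.1, hb2.1]
      · nlinarith [hb1.1, hb2.1]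
    · rw [h1'] at heq ⊢
      constructor
      · nlinarith [hb1.2, hb2.2]
      · nlinarith [hb1.2, hb2.2]
  exact ⟨funext fun t => (key t).1, funext fun t => (key t).2⟩

lemma indicator_sum {n : ℕ} (S B : Finset (Fin n)) :
    ∑ t ∈ S, (if t ∈ B then (1:ℝ) else 0) = ((S.filter (· ∈ B)).card : ℝ) := by
  rw [Finset.sum_boole]

lemma indicator_mem {n k : ℕ} (B : Finset (Fin n)) (hcard : B.card = k)
    (htl : (B.filter (fun t : Fin n => k ≤ (t:ℕ))).card ≤ 1) :
    (fun i => if i ∈ B then (1:ℝ) else 0) ∈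
      {y : Fin n → ℝ | (∀ t, 0 ≤ y t ∧ y t ≤ 1) ∧ (∑ t, y t = (k:ℝ)) ∧
      ∑ t ∈ Finset.univ.filter (fun t : Fin n => k ≤ (t:ℕ)), y t ≤ 1} := by
  refine ⟨fun t => ?_, ?_, ?_⟩
  · dsimp only; split_ifs <;> norm_num
  · rw [indicator_sum]
    have : Finset.univ.filter (· ∈ B) = B := by simp
    rw [this, hcard]
  · rw [indicator_sum]
    have : (Finset.univ.filter (fun t : Fin n => k ≤ (t:ℕ))).filter (· ∈ B)
        = B.filter (fun t : Fin n => k ≤ (t:ℕ)) := by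
      ext t; simp only [Finset.mem_filter, Finset.mem_univ, true_and]; tauto
    rw [this]
    exact_mod_cast htl

lemma good_B {n k : ℕ} (hk : 0 < k) (hkn : k < n) (B : Finset (Fin n))
    (hB : B = Finset.univ.filter (fun i : Fin n => (i : ℕ) < k) ∨
        ∃ i j : Fin n, (i : ℕ) < k ∧ k ≤ (j : ℕ) ∧
          B = insert j ((Finset.univ.filter (fun i' : Fin n => (i' : ℕ) < k)).erase i)) :
    B.card = k ∧ (B.filter (fun t : Fin n => k ≤ (t:ℕ))).card ≤ 1 := by
  set Hd := Finset.univ.filter (fun i : Fin n => (i : ℕ) < k) with hHd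
  have hHdcard : Hd.card = k := card_head n k hkn.le
  rcases hB with rfl | ⟨i, j, hik, hjk, rfl⟩
  · constructor
    · exact hHdcard
    · have : Hd.filter (fun t : Fin n => k ≤ (t:ℕ)) = ∅ := by
        ext t
        simp only [hHd, Finset.mem_filter, Finset.mem_univ, true_and, Finset.notMem_empty,
          iff_false]
        omega
      rw [this]; simp
  · have hiHd : i ∈ Hd := by simp [hHd, hik]
    have hjHd : j ∉ Hd.erase i := by
      rw [Finset.mem_erase]
      rintro ⟨-, hj⟩
      simp only [hHd, Finset.mem_filter, Finset.mem_univ, true_and] at hj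
      omega
    constructor
    · rw [Finset.card_insert_of_notMem hjHd, Finset.card_erase_of_mem hiHd, hHdcard]
      omega
    · have : (insert j (Hd.erase i)).filter (fun t : Fin n => k ≤ (t:ℕ)) = {j} := by
        ext t
        simp only [Finset.mem_filter, Finset.mem_insert, Finset.mem_erase, hHd,
          Finset.mem_filter, Finset.mem_univ, true_and, Finset.mem_singleton]
        constructor
        · rintro ⟨h1 | ⟨-, h1⟩, h2⟩
          · exact h1
          · omega
        · rintro rfl; exact ⟨Or.inl rfl, hjk⟩
      rw [this]; simp

lemma indicator_inj {n : ℕ} :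
    Function.Injective (fun B : Finset (Fin n) => fun i => if i ∈ B then (1:ℝ) else 0) := by
  intro B B' h
  ext t
  have ht := congrFun h t
  by_cases h1 : t ∈ B <;> by_cases h2 : t ∈ B' <;> simp [h1, h2] at ht ⊢

lemma card_V {n k : ℕ} (hk : 0 < k) (hkn : k < n) :
    {y : Fin n → ℝ | ∃ B : Finset (Fin n),
      (B = Finset.univ.filter (fun i : Fin n => (i : ℕ) < k) ∨
        ∃ i j : Fin n, (i : ℕ) < k ∧ k ≤ (j : ℕ) ∧
          B = insert j ((Finset.univ.filter (fun i' : Fin n => (i' : ℕ) < k)).erase i)) ∧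
      y = fun i => if i ∈ B then (1 : ℝ) else 0}.ncard = k * (n - k) + 1 := by
  set Hd := Finset.univ.filter (fun i : Fin n => (i : ℕ) < k) with hHd
  set pr := (Finset.univ.filter fun i : Fin n => (i:ℕ) < k) ×ˢ
    (Finset.univ.filter fun j : Fin n => k ≤ (j:ℕ)) with hpr
  set img := pr.image (fun p : Fin n × Fin n => insert p.2 (Hd.erase p.1)) with himg
  set 𝓑 : Finset (Finset (Fin n)) := insert Hd img with h𝓑
  have hcond : ∀ B : Finset (Fin n), B ∈ 𝓑 ↔
      (B = Hd ∨ ∃ i j : Fin n, (i : ℕ) < k ∧ k ≤ (j : ℕ) ∧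
        B = insert j (Hd.erase i)) := by
    intro B
    simp only [h𝓑, himg, hpr, Finset.mem_insert, Finset.mem_image, Finset.mem_product,
      Finset.mem_filter, Finset.mem_univ, true_and, Prod.exists]
    constructor
    · rintro (rfl | ⟨i, j, ⟨h1, h2⟩, rfl⟩)
      · exact Or.inl rfl
      · exact Or.inr ⟨i, j, h1, h2, rfl⟩
    · rintro (rfl | ⟨i, j, h1, h2, rfl⟩)
      · exact Or.inl rfl
      · exact Or.inr ⟨i, j, ⟨h1, h2⟩, rfl⟩
  have hVeq : {y : Fin n → ℝ | ∃ B : Finset (Fin n),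
      (B = Hd ∨ ∃ i j : Fin n, (i : ℕ) < k ∧ k ≤ (j : ℕ) ∧
          B = insert j (Hd.erase i)) ∧
      y = fun i => if i ∈ B then (1 : ℝ) else 0} =
      (fun B : Finset (Fin n) => fun i => if i ∈ B then (1:ℝ) else 0) '' ↑𝓑 := by
    ext y
    simp only [Set.mem_setOf_eq, Set.mem_image, Finset.mem_coe]
    constructor
    · rintro ⟨B, hB, rfl⟩
      exact ⟨B, (hcond B).mpr hB, rfl⟩
    · rintro ⟨B, hB, rfl⟩
      exact ⟨B, (hcond B).mp hB, rfl⟩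
  rw [hVeq, Set.ncard_image_of_injective _ indicator_inj, Set.ncard_coe_finset]
  have hnotmem : Hd ∉ img := by
    rw [himg, Finset.mem_image]
    rintro ⟨⟨i, j⟩, hp, heq⟩
    simp only [hpr, Finset.mem_product, Finset.mem_filter, Finset.mem_univ, true_and] at hp
    have : j ∈ Hd := by rw [← heq]; exact Finset.mem_insert_self _ _
    simp only [hHd, Finset.mem_filter, Finset.mem_univ, true_and] at this
    omega
  have hinjOn : Set.InjOn (fun p : Fin n × Fin n => insert p.2 (Hd.erase p.1)) ↑pr := by
    rintro ⟨i, j⟩ hp ⟨i', j'⟩ hq heq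
    simp only [hpr, Finset.coe_product, Set.mem_prod, Finset.mem_coe, Finset.mem_filter,
      Finset.mem_univ, true_and] at hp hq
    simp only at heq
    have hjHd : ∀ (a : Fin n) (b : Fin n), k ≤ (a:ℕ) → a ∉ Hd.erase b := by
      intro a b ha hmem
      rw [Finset.mem_erase] at hmem
      simp only [hHd, Finset.mem_filter, Finset.mem_univ, true_and] at hmem
      omega
    have hjj : j = j' := by
      have : j ∈ insert j' (Hd.erase i') := by rw [← heq]; exact Finset.mem_insert_self _ _
      rcases Finset.mem_insert.mp this with h | h
      · exact h
      · exact absurd h (hjHd j i' hp.2)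
    subst hjj
    have herase : Hd.erase i = Hd.erase i' := by
      have h1 := Finset.erase_insert (hjHd j i hp.2)
      have h2 := Finset.erase_insert (hjHd j i' hq.2)
      rw [← h1, ← h2, heq]
    have hii : i = i' := by
      have hi'Hd : i' ∈ Hd := by simp [hHd, hq.1]
      have : i' ∉ Hd.erase i := by rw [herase]; exact Finset.notMem_erase i' Hd
      rw [Finset.mem_erase] at this
      push_neg at this
      by_contra hne
      exact this (fun he => hne he.symm) hi'Hd
    simp [hii]
  rw [h𝓑, Finset.card_insert_of_notMem hnotmem, himg, Finset.card_image_of_injOn hinjOn,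
    hpr, Finset.card_product, card_head n k hkn.le, card_tail n k hkn.le]


/-- The polytope `{x ∈ [0,1]^n : x₁+⋯+xₙ = k, x_{k+1}+⋯+xₙ ≤ 1}` (the matroid
polytope of the minimal matroid `T_{k,n}`, coordinates indexed from 0) has exactly
`k*(n-k)+1` vertices: the indicator vectors of the set `{0,…,k-1}` and of the sets
`({0,…,k-1} \\ {i}) ∪ {j}` for `i < k ≤ j`. -/
theorem vertices_minimal_matroid_polytope (n k : ℕ) (hk : 0 < k) (hkn : k < n)
    (P : Set (Fin n → ℝ))
    (hP : P = {x : Fin n → ℝ | (∀ i, 0 ≤ x i ∧ x i ≤ 1) ∧ (∑ i, x i = k) ∧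
      ∑ i ∈ Finset.univ.filter (fun i : Fin n => k ≤ (i : ℕ)), x i ≤ 1})
    (V : Set (Fin n → ℝ))
    (hV : V = {y : Fin n → ℝ | ∃ B : Finset (Fin n),
      (B = Finset.univ.filter (fun i : Fin n => (i : ℕ) < k) ∨
        ∃ i j : Fin n, (i : ℕ) < k ∧ k ≤ (j : ℕ) ∧
          B = insert j ((Finset.univ.filter (fun i' : Fin n => (i' : ℕ) < k)).erase i)) ∧
      y = fun i => if i ∈ B then (1 : ℝ) else 0}) :
    Set.extremePoints ℝ P = V ∧ V.ncard = k * (n - k) + 1 := by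
  subst hP hV
  constructor
  · ext x
    constructor
    · intro hext
      have h01 := extreme_zero_one hext
      obtain ⟨hb, hs, ht⟩ := hext.1
      exact classify hk hkn hs ht h01
    · rintro ⟨B, hBcond, rfl⟩
      obtain ⟨hcard, htl⟩ := good_B hk hkn B hBcond
      apply zero_one_extreme (indicator_mem B hcard htl)
      intro t; by_cases h : t ∈ B <;> simp [h]
  · exact card_V hk hkn
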